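/- arXiv:1301.6977 — 3 statements merged into one kernel-verified Lean document; each statement's English description precedes it below -/
import Mathlib

section
/- For every real number α in the open interval (0,1), there exists a sequence {l_i} of natural numbers with l_i ≥ 5 for all i such that the infinite product of (l_i - 2)/l_i converges to α, i.e., lim_{i→∞} ∏_{j=0}^{i} (l_j - 2)/l_j = α. -/
open Filter

private lemma ch_ex {α x : ℝ} (hα : 0 < α) (hx : α < x) :
    ∃ l : ℕ, 5 ≤ l ∧ α < x * (((l : ℝ) - 2) / l) := by
  obtain ⟨n, hn⟩ := exists_nat_gt (2 * x / (x - α))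
  refine ⟨max 5 n, le_max_left _ _, ?_⟩
  set l := max 5 n with hldef
  have hl5 : (5 : ℕ) ≤ l := le_max_left _ _
  have hlr : (5 : ℝ) ≤ (l : ℝ) := by exact_mod_cast hl5
  have hln : (n : ℝ) ≤ (l : ℝ) := by exact_mod_cast le_max_right 5 n
  have h2 : 2 * x / (x - α) < (l : ℝ) := lt_of_lt_of_le hn hln
  have hxa : 0 < x - α := sub_pos.2 hx
  have h3 : 2 * x < (l : ℝ) * (x - α) := by
    rw [div_lt_iff₀ hxa] at h2; linarith
  have hlpos : (0 : ℝ) < l := by linarith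
  have : α < x * ((l : ℝ) - 2) / l := by
    rw [lt_div_iff₀ hlpos]; nlinarith
  rwa [mul_div_assoc] at this

private noncomputable def ch (α x : ℝ) : ℕ :=
  if h : 0 < α ∧ α < x then Nat.find (ch_ex h.1 h.2) else 5

private lemma ch_ge5 (α x : ℝ) : 5 ≤ ch α x := by
  unfold ch
  split_ifs with h
  · exact (Nat.find_spec (ch_ex h.1 h.2)).1
  · exact le_refl 5

private lemma ch_spec {α x : ℝ} (hα : 0 < α) (hx : α < x) :
    α < x * (((ch α x : ℝ) - 2) / (ch α x)) := by
  unfold ch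
  rw [dif_pos ⟨hα, hx⟩]
  exact (Nat.find_spec (ch_ex hα hx)).2

private lemma ch_min {α x : ℝ} (hα : 0 < α) (hx : α < x) {k : ℕ}
    (hk5 : 5 ≤ k) (hk : k < ch α x) :
    ¬ α < x * (((k : ℝ) - 2) / k) := by
  unfold ch at hk
  rw [dif_pos ⟨hα, hx⟩] at hk
  have := Nat.find_min (ch_ex hα hx) hk
  tauto

private noncomputable def Pa (α : ℝ) : ℕ → ℝ
  | 0 => 1
  | n + 1 => Pa α n * (((ch α (Pa α n) : ℝ) - 2) / (ch α (Pa α n)))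

/-- For every real α ∈ (0,1) there is a sequence of naturals `l i ≥ 5` such that
the partial products `∏_{j=0}^{i} (l j - 2)/(l j)` converge to α. -/
theorem stmt_0 (α : ℝ) (hα : α ∈ Set.Ioo (0:ℝ) 1) :
    ∃ l : ℕ → ℕ, (∀ i, 5 ≤ l i) ∧
      Tendsto (fun i => ∏ j ∈ Finset.range (i + 1), ((l j : ℝ) - 2) / (l j))
        atTop (nhds α) := by
  obtain ⟨hα0, hα1⟩ := hα
  set l : ℕ → ℕ := fun n => ch α (Pa α n) with hl
  have hl5 : ∀ n, 5 ≤ l n := fun n => ch_ge5 _ _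
  have hl5r : ∀ n, (5 : ℝ) ≤ (l n : ℝ) := fun n => by exact_mod_cast hl5 n
  -- invariant
  have hP : ∀ n, α < Pa α n := by
    intro n
    induction n with
    | zero => simpa [Pa] using hα1
    | succ n ih =>
      have := ch_spec hα0 ih
      simpa [Pa, hl] using this
  have hPpos : ∀ n, 0 < Pa α n := fun n => lt_trans hα0 (hP n)
  -- antitone
  have hanti : Antitone (Pa α) := by
    apply antitone_nat_of_succ_le
    intro n
    have h5 := hl5r n
    have hpos : (0 : ℝ) < (l n : ℝ) := by linarith
    have hr1 : ((l n : ℝ) - 2) / (l n) ≤ 1 := by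
      rw [div_le_one hpos]; linarith
    have : Pa α (n+1) = Pa α n * (((l n : ℝ) - 2) / (l n)) := rfl
    rw [this]
    nlinarith [hPpos n, hr1, div_nonneg (by linarith : (0:ℝ) ≤ (l n : ℝ) - 2) hpos.le]
  -- limit exists
  have hbdd : BddBelow (Set.range (Pa α)) := by
    refine ⟨α, ?_⟩
    rintro _ ⟨n, rfl⟩
    exact (hP n).le
  set L := ⨅ n, Pa α n with hLdef
  have hPL : Tendsto (Pa α) atTop (nhds L) := tendsto_atTop_ciInf hanti hbdd
  have hαL : α ≤ L := le_ciInf fun n => (hP n).le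
  have hL0 : (0 : ℝ) < L := lt_of_lt_of_le hα0 hαL
  -- ratios tend to 1
  have hPsucc : Tendsto (fun n => Pa α (n + 1)) atTop (nhds L) :=
    hPL.comp (tendsto_add_atTop_nat 1)
  have hratio : Tendsto (fun n => ((l n : ℝ) - 2) / (l n)) atTop (nhds 1) := by
    have := hPsucc.div hPL hL0.ne'
    rw [div_self hL0.ne'] at this
    refine this.congr fun n => ?_
    simp only [Pi.div_apply]
    have h : Pa α (n+1) = Pa α n * (((l n : ℝ) - 2) / (l n)) := rfl
    rw [h, mul_comm, mul_div_assoc, div_self (hPpos n).ne', mul_one]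
  -- l tends to infinity
  have hlinf : Tendsto (fun n => (l n : ℝ)) atTop atTop := by
    rw [tendsto_atTop]
    intro M
    set b := max M 3 with hb
    have hb3 : (3 : ℝ) ≤ b := le_max_right _ _
    have hb0 : (0 : ℝ) < b := by linarith
    have hlt : (1 : ℝ) - 2 / b < 1 := by
      have : (0:ℝ) < 2 / b := by positivity
      linarith
    have hev : ∀ᶠ n in atTop, 1 - 2 / b < ((l n : ℝ) - 2) / (l n) :=
      hratio.eventually (eventually_gt_nhds hlt)
    filter_upwards [hev] with n hn
    have h5 := hl5r n
    have hpos : (0 : ℝ) < (l n : ℝ) := by linarith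
    have heq : ((l n : ℝ) - 2) / (l n) = 1 - 2 / (l n) := by
      field_simp
    rw [heq] at hn
    have h2 : 2 / (l n : ℝ) < 2 / b := by linarith
    have h3 : 2 * b < 2 * (l n : ℝ) := (div_lt_div_iff₀ hpos hb0).mp h2
    have : M ≤ b := le_max_left _ _
    linarith
  have hl6 : ∀ᶠ n in atTop, (6 : ℝ) ≤ (l n : ℝ) := hlinf.eventually_ge_atTop 6
  -- bound from minimality
  have hbound : ∀ᶠ n in atTop,
      Pa α n ≤ α * ((l n : ℝ) - 1) / ((l n : ℝ) - 3) := by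
    filter_upwards [hl6] with n h6
    have h6n : 6 ≤ l n := by exact_mod_cast h6
    have hk5 : 5 ≤ l n - 1 := by omega
    have hklt : l n - 1 < l n := by omega
    have hmin := ch_min hα0 (hP n) hk5 hklt
    push_neg at hmin
    have hcast : ((l n - 1 : ℕ) : ℝ) = (l n : ℝ) - 1 := by
      have : 1 ≤ l n := by omega
      push_cast [this]; ring
    rw [hcast] at hmin
    have hl3 : (0 : ℝ) < (l n : ℝ) - 3 := by linarith
    have hl1 : (0 : ℝ) < (l n : ℝ) - 1 := by linarith
    have hmin' : Pa α n * (((l n : ℝ) - 3) / ((l n : ℝ) - 1)) ≤ α := by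
      have : (l n : ℝ) - 1 - 2 = (l n : ℝ) - 3 := by ring
      rw [this] at hmin
      exact hmin
    have hc : (0 : ℝ) < ((l n : ℝ) - 3) / ((l n : ℝ) - 1) := by positivity
    have := (le_div_iff₀ hc).mpr hmin'
    rwa [div_div_eq_mul_div] at this
  -- bound tends to α
  have h3inf : Tendsto (fun n => (l n : ℝ) - 3) atTop atTop :=
    tendsto_atTop_add_const_right atTop (-3) hlinf
  have h2z : Tendsto (fun n => 2 / ((l n : ℝ) - 3)) atTop (nhds 0) := by
    have := h3inf.inv_tendsto_atTop
    have h2 := this.const_mul (2 : ℝ)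
    simpa [div_eq_mul_inv] using h2
  have hfrac : Tendsto (fun n => ((l n : ℝ) - 1) / ((l n : ℝ) - 3)) atTop (nhds 1) := by
    have hsum : Tendsto (fun n => 1 + 2 / ((l n : ℝ) - 3)) atTop (nhds 1) := by
      have := (tendsto_const_nhds : Tendsto (fun _ : ℕ => (1:ℝ)) atTop (nhds 1)).add h2z
      simpa using this
    refine hsum.congr' ?_
    filter_upwards [hl6] with n h6
    have hl3 : ((l n : ℝ) - 3) ≠ 0 := by intro h; linarith
    field_simp
    ring
  have hboundlim : Tendsto (fun n => α * ((l n : ℝ) - 1) / ((l n : ℝ) - 3))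
      atTop (nhds α) := by
    have := hfrac.const_mul α
    simpa [mul_div_assoc, mul_one] using this
  have hLα : L ≤ α := le_of_tendsto_of_tendsto hPL hboundlim hbound
  have hLeq : L = α := le_antisymm hLα hαL
  rw [hLeq] at hPL
  refine ⟨l, hl5, ?_⟩
  have hprod : ∀ n, ∏ j ∈ Finset.range n, ((l j : ℝ) - 2) / (l j) = Pa α n := by
    intro n
    induction n with
    | zero => simp [Pa]
    | succ n ih => rw [Finset.prod_range_succ, ih]; rfl
  have hfin : Tendsto (fun i => Pa α (i + 1)) atTop (nhds α) :=
    hPL.comp (tendsto_add_atTop_nat 1)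
  exact hfin.congr fun i => (hprod (i + 1)).symm
end

section
/- Let {l_i} be a sequence of integers with l_i ≥ 5, and suppose ∏_{j=0}^{i}(l_j-2)/l_j → α. Then the sequence L_i = log(∏_{k=0}^{i} ((l_k-2)!/2)^{p_k}) / log(∏_{k=0}^{i} (l_k!/2)^{q_k}), where p_k = ∏_{j=0}^{k-1}(l_j-2) and q_k = ∏_{j=0}^{k-1} l_j (with empty products equal to 1), converges to α. -/
open Filter

lemma aux_fact_lb : ∀ n : ℕ, 3 ≤ n → 2 * 3 ^ (n - 2) ≤ Nat.factorial n := by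
  intro n hn
  induction n with
  | zero => omega
  | succ m ih =>
    rcases Nat.lt_or_ge m 3 with hm | hm
    · interval_cases m <;> simp [Nat.factorial] <;> omega
    · have h1 := ih hm
      have : m + 1 - 2 = (m - 2) + 1 := by omega
      rw [this, pow_succ, Nat.factorial_succ]
      calc 2 * (3 ^ (m-2) * 3) = 3 * (2 * 3 ^ (m-2)) := by ring
        _ ≤ (m+1) * Nat.factorial m := Nat.mul_le_mul (by omega) h1

lemma aux_phi : Tendsto (fun x : ℝ => 2 * Real.log x / ((x - 2) * Real.log 3)) atTop (nhds 0) := by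
  have hlog3 : (0:ℝ) < Real.log 3 := Real.log_pos (by norm_num)
  have hmain : Tendsto (fun x : ℝ => Real.log x / x) atTop (nhds 0) :=
    Real.isLittleO_log_id_atTop.tendsto_div_nhds_zero
  have hupper : Tendsto (fun x : ℝ => (4 / Real.log 3) * (Real.log x / x)) atTop (nhds 0) := by
    simpa using hmain.const_mul (4 / Real.log 3)
  apply tendsto_of_tendsto_of_tendsto_of_le_of_le' tendsto_const_nhds hupper
  · filter_upwards [eventually_ge_atTop (3:ℝ)] with x hx
    have h1 : (0:ℝ) ≤ Real.log x := Real.log_nonneg (by linarith)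
    have h2 : (0:ℝ) < x - 2 := by linarith
    positivity
  · filter_upwards [eventually_ge_atTop (4:ℝ)] with x hx
    have hx0 : (0:ℝ) < x := by linarith
    have hlx : (0:ℝ) ≤ Real.log x := Real.log_nonneg (by linarith)
    have h2 : (0:ℝ) < x - 2 := by linarith
    rw [div_le_iff₀ (by positivity)]
    calc 2 * Real.log x = (4 / Real.log 3 * (Real.log x / x)) * ((x/2) * Real.log 3) := by
          field_simp; ring
      _ ≤ (4 / Real.log 3 * (Real.log x / x)) * ((x - 2) * Real.log 3) := by
          apply mul_le_mul_of_nonneg_left (by nlinarith) (by positivity)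

/-- Key dimension computation: if `l i ≥ 5` and `∏_{j≤i} (l j - 2)/(l j) → α`, then the
ratio of the logs of the orders of the iterated wreath products
`A_{l_i-2} ≀ ⋯ ≀ A_{l_0-2}` and `A_{l_i} ≀ ⋯ ≀ A_{l_0}` also converges to α. -/
theorem stmt_12 (l : ℕ → ℕ) (hl : ∀ i, 5 ≤ l i) (α : ℝ)
    (h : Tendsto (fun i => ∏ j ∈ Finset.range (i + 1), ((l j : ℝ) - 2) / (l j))
      atTop (nhds α)) :
    Tendsto (fun i =>
        (∑ k ∈ Finset.range (i + 1),
            (∏ j ∈ Finset.range k, ((l j : ℝ) - 2)) *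
              Real.log (((l k - 2).factorial : ℝ) / 2)) /
        (∑ k ∈ Finset.range (i + 1),
            (∏ j ∈ Finset.range k, (l j : ℝ)) *
              Real.log (((l k).factorial : ℝ) / 2)))
      atTop (nhds α) := by
  set A : ℕ → ℝ := fun k => Real.log (((l k - 2).factorial : ℝ) / 2) with hA
  set B : ℕ → ℝ := fun k => Real.log (((l k).factorial : ℝ) / 2) with hB
  set p : ℕ → ℝ := fun k => ∏ j ∈ Finset.range k, ((l j : ℝ) - 2) with hp
  set q : ℕ → ℝ := fun k => ∏ j ∈ Finset.range k, (l j : ℝ) with hq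
  set P : ℕ → ℝ := fun k => ∏ j ∈ Finset.range k, ((l j : ℝ) - 2) / (l j) with hP
  set a : ℕ → ℝ := fun k => p k * A k with ha
  set b : ℕ → ℝ := fun k => q k * B k with hb
  -- basic positivity facts
  have hl3 : ∀ k, (3:ℝ) ≤ (l k : ℝ) - 2 := by
    intro k
    have := hl k
    have : (5:ℝ) ≤ (l k : ℝ) := by exact_mod_cast this
    linarith
  have hl5 : ∀ k, (5:ℝ) ≤ (l k : ℝ) := by
    intro k; exact_mod_cast hl k
  have hA0 : ∀ k, 0 < A k := by
    intro k
    apply Real.log_pos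
    have h6 : (6:ℕ) ≤ (l k - 2).factorial := by
      have : 3 ≤ l k - 2 := by have := hl k; omega
      calc (6:ℕ) = Nat.factorial 3 := rfl
        _ ≤ _ := Nat.factorial_le this
    have : (6:ℝ) ≤ ((l k - 2).factorial : ℝ) := by exact_mod_cast h6
    linarith
  have hB1 : ∀ k, 1 ≤ B k := by
    intro k
    rw [hB]
    rw [Real.le_log_iff_exp_le (by
      have h120 : (120:ℕ) ≤ (l k).factorial := by
        calc (120:ℕ) = Nat.factorial 5 := rfl
          _ ≤ _ := Nat.factorial_le (hl k)
      have : (120:ℝ) ≤ ((l k).factorial : ℝ) := by exact_mod_cast h120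
      linarith)]
    have h120 : (120:ℕ) ≤ (l k).factorial := by
      calc (120:ℕ) = Nat.factorial 5 := rfl
        _ ≤ _ := Nat.factorial_le (hl k)
    have h1 : (120:ℝ) ≤ ((l k).factorial : ℝ) := by exact_mod_cast h120
    have h2 : Real.exp 1 < 2.7182818286 := Real.exp_one_lt_d9
    linarith
  have hq1 : ∀ k, 1 ≤ q k := by
    intro k
    show (1:ℝ) ≤ ∏ j ∈ Finset.range k, (l j : ℝ)
    have := Finset.prod_le_prod (s := Finset.range k) (f := fun _ => (1:ℝ))
      (g := fun j => (l j : ℝ)) (by intros; norm_num) (by intro j _; show (1:ℝ) ≤ (l j : ℝ); linarith [hl5 j])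
    simpa using this
  have hp0 : ∀ k, 0 < p k := by
    intro k
    apply Finset.prod_pos
    intro j _
    linarith [hl3 j]
  have hb1 : ∀ k, 1 ≤ b k := by
    intro k
    calc (1:ℝ) = 1 * 1 := by ring
      _ ≤ q k * B k := mul_le_mul (hq1 k) (hB1 k) (by norm_num) (by linarith [hq1 k])
  have hb0 : ∀ k, 0 < b k := fun k => lt_of_lt_of_le one_pos (hb1 k)
  have ha0 : ∀ k, 0 < a k := fun k => mul_pos (hp0 k) (hA0 k)
  -- B k = log (l k * (l k - 1)) + A k
  have hBA : ∀ k, B k = Real.log ((l k : ℝ) * ((l k : ℝ) - 1)) + A k := by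
    intro k
    have hfactN : (l k).factorial = l k * ((l k - 1) * (l k - 2).factorial) := by
      obtain ⟨m, hm⟩ : ∃ m, l k = m + 2 := ⟨l k - 2, by have := hl k; omega⟩
      rw [hm, show m + 2 - 1 = m + 1 from rfl, show m + 2 - 2 = m from rfl,
        Nat.factorial_succ, Nat.factorial_succ]
    have hcast : ((l k).factorial : ℝ) = (l k : ℝ) * (((l k : ℝ) - 1) * ((l k - 2).factorial : ℝ)) := by
      have := congrArg (Nat.cast : ℕ → ℝ) hfactN
      push_cast [Nat.cast_sub (show 1 ≤ l k by have := hl k; omega)] at this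
      exact this
    have harg : ((l k).factorial : ℝ) / 2
        = ((l k : ℝ) * ((l k : ℝ) - 1)) * (((l k - 2).factorial : ℝ) / 2) := by
      rw [hcast]; ring
    show Real.log (((l k).factorial : ℝ) / 2) = _
    rw [harg, Real.log_mul (by nlinarith [hl5 k]) (by
      have h6 : (6:ℕ) ≤ (l k - 2).factorial := by
        have : 3 ≤ l k - 2 := by have := hl k; omega
        calc (6:ℕ) = Nat.factorial 3 := rfl
          _ ≤ _ := Nat.factorial_le this
      have : (6:ℝ) ≤ ((l k - 2).factorial : ℝ) := by exact_mod_cast h6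
      positivity)]
  -- B lower bound
  have hBlb : ∀ k, ((l k : ℝ) - 2) * Real.log 3 ≤ B k := by
    intro k
    have hN := aux_fact_lb (l k) (by have := hl k; omega)
    have h1 : ((3:ℝ)) ^ (l k - 2) ≤ ((l k).factorial : ℝ) / 2 := by
      rw [le_div_iff₀ (by norm_num)]
      calc ((3:ℝ)) ^ (l k - 2) * 2 = ((2 * 3 ^ (l k - 2) : ℕ) : ℝ) := by push_cast; ring
        _ ≤ _ := by exact_mod_cast hN
    have h2 : Real.log ((3:ℝ) ^ (l k - 2)) ≤ Real.log (((l k).factorial : ℝ) / 2) :=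
      Real.log_le_log (by positivity) h1
    rw [Real.log_pow] at h2
    have h3 : (((l k - 2 : ℕ) : ℝ)) = (l k : ℝ) - 2 := by
      push_cast [Nat.cast_sub (show 2 ≤ l k by have := hl k; omega)]; ring
    rw [h3] at h2
    exact h2
  -- key : a k / b k → α
  have hP_pos : ∀ k, 0 < P k := by
    intro k
    apply Finset.prod_pos
    intro j _
    exact div_pos (by linarith [hl3 j]) (by linarith [hl5 j])
  have hPt : Tendsto P atTop (nhds α) := (tendsto_add_atTop_iff_nat 1).mp h
  have hRle : ∀ k, A k / B k ≤ 1 := by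
    intro k
    rw [div_le_one (by linarith [hB1 k])]
    rw [hBA k]
    have : 0 ≤ Real.log ((l k : ℝ) * ((l k : ℝ) - 1)) := by
      apply Real.log_nonneg
      nlinarith [hl5 k]
    linarith
  have hab_eq : ∀ k, a k / b k = P k * (A k / B k) := by
    intro k
    show (p k * A k) / (q k * B k) = (∏ j ∈ Finset.range k, ((l j : ℝ) - 2) / (l j)) * (A k / B k)
    rw [Finset.prod_div_distrib]
    show _ = (p k / q k) * (A k / B k)
    rw [div_mul_div_comm]
  have hα0 : 0 ≤ α := ge_of_tendsto' hPt (fun k => (hP_pos k).le)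
  have hcore : Tendsto (fun k => a k / b k) atTop (nhds α) := by
    rcases eq_or_lt_of_le hα0 with hα | hα
    · -- α = 0 : squeeze 0 ≤ a/b ≤ P
      rw [← hα]
      apply tendsto_of_tendsto_of_tendsto_of_le_of_le (g := fun _ => (0:ℝ)) (h := P)
        tendsto_const_nhds (by rwa [← hα] at hPt)
      · intro k
        show (0:ℝ) ≤ a k / b k
        exact (div_nonneg (ha0 k).le (hb0 k).le)
      · intro k
        show a k / b k ≤ P k
        rw [hab_eq k]
        calc P k * (A k / B k) ≤ P k * 1 :=
              mul_le_mul_of_nonneg_left (hRle k) (hP_pos k).le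
          _ = P k := mul_one _
    · -- α > 0
      have hlt : Tendsto (fun k => (l k : ℝ)) atTop atTop := by
        have hP1 : Tendsto (fun k => P (k + 1)) atTop (nhds α) :=
          (tendsto_add_atTop_iff_nat 1).mpr hPt
        have hdiv : Tendsto (fun k => P (k + 1) / P k) atTop (nhds 1) := by
          have := hP1.div hPt (ne_of_gt hα)
          rwa [div_self (ne_of_gt hα)] at this
        have hfrac : Tendsto (fun k => ((l k : ℝ) - 2) / (l k)) atTop (nhds 1) := by
          apply hdiv.congr
          intro k
          have hps : P (k + 1) = P k * (((l k : ℝ) - 2) / (l k)) :=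
            Finset.prod_range_succ _ _
          rw [hps, mul_comm, mul_div_assoc, div_self (ne_of_gt (hP_pos k)), mul_one]
        have h2l : Tendsto (fun k => 2 / (l k : ℝ)) atTop (nhds 0) := by
          have := tendsto_const_nhds (x := (1:ℝ)) (f := atTop).sub hfrac
          rw [sub_self] at this
          apply this.congr
          intro k
          have hne : (l k : ℝ) ≠ 0 := by have := hl5 k; linarith
          field_simp; ring
        have hinv : Tendsto (fun k => (2 / (l k : ℝ))⁻¹) atTop atTop := by
          apply Filter.Tendsto.inv_tendsto_nhdsGT_zero
          rw [tendsto_nhdsWithin_iff]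
          refine ⟨h2l, Eventually.of_forall fun k => ?_⟩
          have := hl5 k
          have : (0:ℝ) < (l k : ℝ) := by linarith
          exact Set.mem_Ioi.mpr (by positivity)
        have := hinv.atTop_mul_const (show (0:ℝ) < 2 by norm_num)
        apply this.congr
        intro k
        have hne : (l k : ℝ) ≠ 0 := by have := hl5 k; linarith
        field_simp
      have hphi : Tendsto (fun k => 2 * Real.log (l k : ℝ) / (((l k : ℝ) - 2) * Real.log 3))
          atTop (nhds 0) := aux_phi.comp hlt
      have hlog3 : (0:ℝ) < Real.log 3 := Real.log_pos (by norm_num)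
      have hsq : Tendsto (fun k => 1 - A k / B k) atTop (nhds 0) := by
        apply tendsto_of_tendsto_of_tendsto_of_le_of_le (g := fun _ => (0:ℝ))
          tendsto_const_nhds hphi
        · intro k
          show (0:ℝ) ≤ 1 - A k / B k
          linarith [hRle k]
        · intro k
          show 1 - A k / B k ≤ 2 * Real.log (l k : ℝ) / (((l k : ℝ) - 2) * Real.log 3)
          have hBpos : 0 < B k := by linarith [hB1 k]
          have hBne : B k ≠ 0 := ne_of_gt hBpos
          have heq : 1 - A k / B k = Real.log ((l k : ℝ) * ((l k : ℝ) - 1)) / B k := by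
            rw [eq_div_iff hBne, sub_mul, one_mul, div_mul_cancel₀ _ hBne]
            linarith [hBA k]
          rw [heq]
          have hnum : Real.log ((l k : ℝ) * ((l k : ℝ) - 1)) ≤ 2 * Real.log (l k : ℝ) := by
            have h1 : (l k : ℝ) * ((l k : ℝ) - 1) ≤ (l k : ℝ) ^ 2 := by nlinarith [hl5 k]
            calc Real.log ((l k : ℝ) * ((l k : ℝ) - 1)) ≤ Real.log ((l k : ℝ) ^ 2) :=
                  Real.log_le_log (by nlinarith [hl5 k]) h1
              _ = 2 * Real.log (l k : ℝ) := by rw [Real.log_pow]; push_cast; ring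
          have hln : 0 ≤ Real.log (l k : ℝ) := Real.log_nonneg (by linarith [hl5 k])
          exact div_le_div₀ (by nlinarith [hln]) hnum (by nlinarith [hl5 k, hlog3]) (hBlb k)
      have hR1 : Tendsto (fun k => A k / B k) atTop (nhds 1) := by
        have := tendsto_const_nhds (x := (1:ℝ)) (f := atTop).sub hsq
        rw [sub_zero] at this
        apply this.congr
        intro k; ring
      have := hPt.mul hR1
      rw [mul_one] at this
      exact this.congr (fun k => (hab_eq k).symm)
  -- Stolz-Cesaro via little-o
  have hTsum : Tendsto (fun n => ∑ k ∈ Finset.range n, b k) atTop atTop := by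
    apply tendsto_atTop_mono _ tendsto_natCast_atTop_atTop
    intro n
    calc (n:ℝ) = ∑ _k ∈ Finset.range n, (1:ℝ) := by simp
      _ ≤ ∑ k ∈ Finset.range n, b k := Finset.sum_le_sum (fun k _ => hb1 k)
  have hfo : (fun k => a k - α * b k) =o[atTop] b := by
    rw [Asymptotics.isLittleO_iff_tendsto (fun k hk => absurd hk (ne_of_gt (hb0 k)))]
    have h1 : Tendsto (fun k => a k / b k - α) atTop (nhds (α - α)) := hcore.sub_const α
    rw [sub_self] at h1
    apply h1.congr
    intro k
    have hbne : b k ≠ 0 := ne_of_gt (hb0 k)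
    field_simp
  have hsumo := hfo.sum_range (fun k => (hb0 k).le) hTsum
  have hdiv0 := hsumo.tendsto_div_nhds_zero
  have final : Tendsto (fun n => (∑ k ∈ Finset.range n, a k) / (∑ k ∈ Finset.range n, b k))
      atTop (nhds α) := by
    have h2 : Tendsto (fun n => α + (∑ k ∈ Finset.range n, (a k - α * b k)) /
        (∑ k ∈ Finset.range n, b k)) atTop (nhds α) := by
      have := tendsto_const_nhds (x := α) (f := atTop (α := ℕ)).add hdiv0
      rwa [add_zero] at this
    apply h2.congr'
    filter_upwards [eventually_ge_atTop 1] with n hn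
    have hTpos : (0:ℝ) < ∑ k ∈ Finset.range n, b k := by
      have h1 : (1:ℝ) ≤ (n:ℝ) := by exact_mod_cast hn
      calc (0:ℝ) < 1 := one_pos
        _ ≤ (n:ℝ) := h1
        _ ≤ _ := by
            calc (n:ℝ) = ∑ _k ∈ Finset.range n, (1:ℝ) := by simp
              _ ≤ _ := Finset.sum_le_sum (fun k _ => hb1 k)
    have hTne : (∑ k ∈ Finset.range n, b k) ≠ 0 := ne_of_gt hTpos
    have hsub : ∑ k ∈ Finset.range n, (a k - α * b k)
        = (∑ k ∈ Finset.range n, a k) - α * ∑ k ∈ Finset.range n, b k := by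
      rw [Finset.sum_sub_distrib, Finset.mul_sum]
    rw [hsub]
    field_simp; ring
  exact (tendsto_add_atTop_iff_nat 1).mpr final
end

section
/- Let {l_i} be a sequence of integers with l_i ≥ 5 and let α_i = ∏_{j=0}^{i-1}(l_j-2)/l_j. Then for each i, ∑_{k=0}^{i} (∏_{j=0}^{k-1}(l_j-2))·log((l_k-2)!) ≥ α_i · (1/(1+T))·∑_{k=0}^{i}(∏_{j=0}^{k-1} l_j)·log(l_k!) where T ≤ 16/l_i; in particular if l_i → ∞ then liminf of the ratio of the two weighted log-factorial sums is at least lim α_i. -/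
open Filter

open Finset in
lemma log_le_half {x : ℝ} (hx : 0 ≤ x) : Real.log x ≤ x / 2 := by
  rcases eq_or_lt_of_le hx with h | h
  · simp [← h]
  · have hs : (0:ℝ) < Real.sqrt x := Real.sqrt_pos.mpr h
    have h1 : Real.log (Real.sqrt x) ≤ Real.sqrt x - 1 := Real.log_le_sub_one_of_pos hs
    have h2 : Real.log (Real.sqrt x) = Real.log x / 2 := Real.log_sqrt hx
    nlinarith [Real.sq_sqrt hx, sq_nonneg (Real.sqrt x - 2)]

lemma exp3_lt : Real.exp 3 < 25 := by
  have h1 : Real.exp 3 = Real.exp 1 ^ (3:ℕ) := by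
    rw [← Real.exp_nat_mul]; norm_num
  have h2 : Real.exp 1 ^ (3:ℕ) < 2.7182818286 ^ (3:ℕ) :=
    pow_lt_pow_left₀ Real.exp_one_lt_d9 (Real.exp_pos 1).le (by norm_num)
  nlinarith [h2, h1]

lemma log_five : (3:ℝ)/2 ≤ Real.log 5 := by
  rw [Real.le_log_iff_exp_le (by norm_num)]
  have h : Real.exp (3/2) ^ (2:ℕ) = Real.exp 3 := by
    rw [← Real.exp_nat_mul]; norm_num
  have h2 : Real.exp (3/2) ^ (2:ℕ) < 5 ^ (2:ℕ) := by
    rw [h]; nlinarith [exp3_lt]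
  exact (lt_of_pow_lt_pow_left₀ 2 (by norm_num) h2).le

open Finset in
lemma log_ge_one {x : ℝ} (hx : 4 ≤ x) : 1 ≤ Real.log x := by
  rw [Real.le_log_iff_exp_le (by linarith)]
  have := Real.exp_one_lt_d9
  linarith

-- factorial log split
lemma log_fact_split {n : ℕ} (hn : 5 ≤ n) :
    Real.log (n.factorial) ≤ 2 * Real.log n + Real.log ((n-2).factorial) := by
  obtain ⟨m, rfl⟩ : ∃ m, n = m + 5 := ⟨n - 5, by omega⟩
  have h1 : (m + 5).factorial = (m+5) * ((m+4) * (m+3).factorial) := by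
    rw [show m+5 = (m+4)+1 by ring, Nat.factorial_succ, show m+4 = (m+3)+1 by ring,
      Nat.factorial_succ]
  have h2 : m + 5 - 2 = m + 3 := by omega
  rw [h2, h1]
  push_cast
  rw [Real.log_mul (by positivity) (by positivity), Real.log_mul (by positivity)
    (by exact_mod_cast (Nat.factorial_pos _).ne')]
  have h3 : Real.log ((m:ℝ)+4) ≤ Real.log ((m:ℝ)+5) :=
    Real.log_le_log (by positivity) (by linarith)
  linarith

-- 3 n log n ≤ 16 log (n-2)! for n ≥ 5
lemma fact_bound : ∀ n : ℕ, 5 ≤ n → 3 * (n:ℝ) * Real.log n ≤ 16 * Real.log ((n-2).factorial) := by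
  intro n hn
  induction n, hn using Nat.le_induction with
  | base =>
    have h : ((5:ℕ) - 2).factorial = 6 := rfl
    rw [h]
    have h2 : Real.log ((5:ℝ)^(15:ℕ)) ≤ Real.log ((6:ℝ)^(16:ℕ)) :=
      Real.log_le_log (by positivity) (by norm_num)
    rw [Real.log_pow, Real.log_pow] at h2
    push_cast at h2 ⊢
    linarith
  | succ n hn ih =>
    obtain ⟨m, rfl⟩ : ∃ m, n = m + 5 := ⟨n - 5, by omega⟩
    have h2 : m + 5 + 1 - 2 = m + 4 := by omega
    have h3 : m + 5 - 2 = m + 3 := by omega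
    rw [h2]
    rw [h3] at ih
    have hfac : (m+4).factorial = (m+4) * (m+3).factorial := by
      rw [show m+4 = (m+3)+1 by ring, Nat.factorial_succ]
    rw [hfac]
    push_cast
    rw [Real.log_mul (by positivity) (by exact_mod_cast (Nat.factorial_pos _).ne')]
    push_cast at ih
    rw [show ((m:ℝ) + 5 + 1) = ((m:ℝ)+6) from by ring]
    -- goal : 3 (m+6) log(m+6) ≤ 16 (log(m+4) + log (m+3)!)
    -- (a) log(m+6) ≤ log(m+5) + 1/(m+5)
    have ha : Real.log ((m:ℝ)+6) - Real.log ((m:ℝ)+5) ≤ 1/((m:ℝ)+5) := by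
      rw [← Real.log_div (by positivity) (by positivity)]
      have := Real.log_le_sub_one_of_pos (show (0:ℝ) < ((m:ℝ)+6)/((m:ℝ)+5) by positivity)
      have h5 : ((m:ℝ)+6)/((m:ℝ)+5) - 1 = 1/((m:ℝ)+5) := by
        field_simp
        norm_num
      linarith
    -- (b) log(m+6) ≤ 2 log(m+4)
    have hb : Real.log ((m:ℝ)+6) ≤ 2 * Real.log ((m:ℝ)+4) := by
      have : Real.log ((m:ℝ)+6) ≤ Real.log (((m:ℝ)+4)^(2:ℕ)) :=
        Real.log_le_log (by positivity) (by nlinarith [sq_nonneg ((m:ℝ)+4)])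
      rw [Real.log_pow] at this
      push_cast at this
      linarith
    -- (c) 1 ≤ log(m+4)
    have hc : 1 ≤ Real.log ((m:ℝ)+4) := log_ge_one (by linarith [Nat.cast_nonneg (α := ℝ) m])
    have hm5 : (0:ℝ) < (m:ℝ)+5 := by positivity
    have ha' : ((m:ℝ)+5) * Real.log ((m:ℝ)+6) ≤ ((m:ℝ)+5) * Real.log ((m:ℝ)+5) + 1 := by
      have := mul_le_mul_of_nonneg_left ha hm5.le
      rw [mul_sub] at this
      rw [mul_one_div, div_self hm5.ne'] at this
      linarith
    nlinarith [ha', hb, hc, ih]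

open Finset in
lemma sumlog (l : ℕ → ℕ) (hl : ∀ i, 5 ≤ l i) :
    ∀ i, ∑ k ∈ Finset.range (i+1), Real.log (l k) / (∏ j ∈ Finset.Ico k i, (l j : ℝ))
      ≤ 3/2 * Real.log (l i) := by
  have hpos : ∀ j, (0:ℝ) < (l j : ℝ) := fun j => by
    have := hl j
    have : (5:ℝ) ≤ (l j : ℝ) := by exact_mod_cast this
    linarith
  have hlog15 : ∀ j, (3:ℝ)/2 ≤ Real.log (l j) := fun j => by
    refine le_trans log_five (Real.log_le_log (by norm_num) ?_)
    exact_mod_cast hl j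
  intro i
  induction i with
  | zero => simp; linarith [hlog15 0]
  | succ i ih =>
    rw [Finset.sum_range_succ]
    have hstep : ∀ k ∈ Finset.range (i+1),
        Real.log (l k) / (∏ j ∈ Finset.Ico k (i+1), (l j : ℝ))
        = (Real.log (l k) / (∏ j ∈ Finset.Ico k i, (l j : ℝ))) / (l i : ℝ) := by
      intro k hk
      rw [Finset.prod_Ico_succ_top (Nat.lt_succ_iff.mp (Finset.mem_range.mp hk)), div_div]
    rw [Finset.sum_congr rfl hstep, ← Finset.sum_div]
    simp only [Finset.Ico_self, Finset.prod_empty, div_one]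
    have h2 : (∑ k ∈ Finset.range (i+1),
        Real.log (l k) / (∏ j ∈ Finset.Ico k i, (l j : ℝ))) / (l i : ℝ) ≤ 3/4 := by
      rw [div_le_iff₀ (hpos i)]
      nlinarith [ih, log_le_half (hpos i).le, hlog15 i, hpos i]
    linarith [hlog15 (i+1)]

open Finset in
lemma key (l : ℕ → ℕ) (hl : ∀ i, 5 ≤ l i) (i : ℕ) :
    (∏ j ∈ Finset.range i, ((l j : ℝ) - 2) / (l j)) *
      (∑ k ∈ Finset.range (i + 1),
        (∏ j ∈ Finset.range k, (l j : ℝ)) * Real.log ((l k).factorial))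
    ≤ (1 + 16 / (l i : ℝ)) *
      (∑ k ∈ Finset.range (i + 1),
        (∏ j ∈ Finset.range k, ((l j : ℝ) - 2)) * Real.log ((l k - 2).factorial)) := by
  have h5 : ∀ j, (5:ℝ) ≤ (l j : ℝ) := fun j => by exact_mod_cast hl j
  have hp : ∀ j, (0:ℝ) < (l j : ℝ) := fun j => by linarith [h5 j]
  have hp2 : ∀ j, (0:ℝ) < (l j : ℝ) - 2 := fun j => by linarith [h5 j]
  set P : ℕ → ℝ := fun k => ∏ j ∈ Finset.range k, ((l j : ℝ) - 2) with hP
  set Q : ℕ → ℝ := fun k => ∏ j ∈ Finset.range k, (l j : ℝ) with hQ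
  set D : ℕ → ℝ := fun k => ∏ j ∈ Finset.Ico k i, (l j : ℝ) with hD
  set α : ℝ := ∏ j ∈ Finset.range i, ((l j : ℝ) - 2) / (l j) with hα
  set A : ℝ := ∑ k ∈ Finset.range (i + 1), P k * Real.log ((l k - 2).factorial) with hA
  set B : ℝ := ∑ k ∈ Finset.range (i + 1), Q k * Real.log ((l k).factorial) with hB
  have hPpos : ∀ k, 0 < P k := fun k => Finset.prod_pos (fun j _ => hp2 j)
  have hQpos : ∀ k, 0 < Q k := fun k => Finset.prod_pos (fun j _ => hp j)
  have hDpos : ∀ k, 0 < D k := fun k => Finset.prod_pos (fun j _ => hp j)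
  have hαPQ : α = P i / Q i := Finset.prod_div_distrib _ _
  have hαQ : ∀ k, k ≤ i → α * Q k = P i / D k := by
    intro k hk
    have hQi : Q k * D k = Q i := Finset.prod_range_mul_prod_Ico _ hk
    rw [hαPQ, ← hQi]
    field_simp [(hQpos k).ne', (hDpos k).ne']
  have hterm : ∀ k ∈ Finset.range (i+1),
      α * (Q k * Real.log ((l k).factorial))
        ≤ P k * Real.log ((l k - 2).factorial) + 2 * (P i / D k) * Real.log (l k) := by
    intro k hk
    have hki : k ≤ i := Nat.lt_succ_iff.mp (Finset.mem_range.mp hk)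
    have hq := hαQ k hki
    have hle1 : P i / D k ≤ P k := by
      rw [div_le_iff₀ (hDpos k)]
      have hPi : P k * (∏ j ∈ Finset.Ico k i, ((l j : ℝ) - 2)) = P i :=
        Finset.prod_range_mul_prod_Ico _ hki
      calc P i = P k * (∏ j ∈ Finset.Ico k i, ((l j : ℝ) - 2)) := hPi.symm
        _ ≤ P k * D k := by
            refine mul_le_mul_of_nonneg_left ?_ (hPpos k).le
            exact Finset.prod_le_prod (fun j _ => (hp2 j).le) (fun j _ => by linarith [hp j])
    have hlogf := log_fact_split (hl k)
    have hlognn : (0:ℝ) ≤ Real.log ((l k - 2).factorial) :=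
      Real.log_nonneg (by exact_mod_cast (Nat.factorial_pos _))
    have hqpos : 0 < P i / D k := div_pos (hPpos i) (hDpos k)
    rw [← mul_assoc, hq]
    calc (P i / D k) * Real.log ((l k).factorial)
        ≤ (P i / D k) * (2 * Real.log (l k) + Real.log ((l k - 2).factorial)) :=
          mul_le_mul_of_nonneg_left hlogf hqpos.le
      _ = (P i / D k) * Real.log ((l k - 2).factorial) + 2 * (P i / D k) * Real.log (l k) := by
          ring
      _ ≤ P k * Real.log ((l k - 2).factorial) + 2 * (P i / D k) * Real.log (l k) := by
          have := mul_le_mul_of_nonneg_right hle1 hlognn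
          linarith
  have hsum : α * B ≤ A + 2 * P i * (∑ k ∈ Finset.range (i+1), Real.log (l k) / D k) := by
    rw [hB, Finset.mul_sum]
    refine le_trans (Finset.sum_le_sum hterm) ?_
    rw [Finset.sum_add_distrib, Finset.mul_sum]
    apply add_le_add_right
    apply le_of_eq
    exact Finset.sum_congr rfl (fun k _ => by ring)
  have hgeom := sumlog l hl i
  have hlast : P i * Real.log ((l i - 2).factorial) ≤ A := by
    refine Finset.single_le_sum (f := fun k => P k * Real.log ((l k - 2).factorial)) ?_ ?_
    · intro k _
      exact mul_nonneg (hPpos k).le (Real.log_nonneg (by exact_mod_cast (Nat.factorial_pos _)))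
    · exact Finset.self_mem_range_succ i
  have hfb := fact_bound (l i) (hl i)
  have h3log : 3 * Real.log (l i) ≤ 16 / (l i : ℝ) * Real.log ((l i - 2).factorial) := by
    rw [div_mul_eq_mul_div, le_div_iff₀ (hp i)]
    nlinarith [hfb]
  have hchain : α * B ≤ A + 16 / (l i : ℝ) * A := by
    have h1 : 2 * P i * (∑ k ∈ Finset.range (i+1), Real.log (l k) / D k)
        ≤ 2 * P i * (3/2 * Real.log (l i)) := by
      refine mul_le_mul_of_nonneg_left hgeom ?_
      linarith [hPpos i]
    have h2 : 2 * P i * (3/2 * Real.log (l i)) = P i * (3 * Real.log (l i)) := by ring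
    have h3 : P i * (3 * Real.log (l i))
        ≤ P i * (16 / (l i : ℝ) * Real.log ((l i - 2).factorial)) :=
      mul_le_mul_of_nonneg_left h3log (hPpos i).le
    have h4 : P i * (16 / (l i : ℝ) * Real.log ((l i - 2).factorial))
        = 16 / (l i : ℝ) * (P i * Real.log ((l i - 2).factorial)) := by ring
    have h5' : 16 / (l i : ℝ) * (P i * Real.log ((l i - 2).factorial)) ≤ 16 / (l i : ℝ) * A := by
      refine mul_le_mul_of_nonneg_left hlast ?_
      positivity
    linarith [hsum]
  linarith [hchain]

/-- Lower-bound half of the dimension computation: with `α_i = ∏_{j<i}(l j - 2)/(l j)`,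
for each `i` there is `T` with `0 ≤ T ≤ 16 / l i` such that
`∑_{k≤i} p_k·log((l_k-2)!) ≥ α_i · (1/(1+T)) · ∑_{k≤i} q_k·log(l_k!)`;
and if `l i → ∞` and `α_i → α`, then `α ≤ liminf` of the ratio of the two sums. -/
theorem stmt_15 (l : ℕ → ℕ) (hl : ∀ i, 5 ≤ l i) :
    (∀ i : ℕ, ∃ T : ℝ, 0 ≤ T ∧ T ≤ 16 / (l i : ℝ) ∧
        (∑ k ∈ Finset.range (i + 1),
            (∏ j ∈ Finset.range k, ((l j : ℝ) - 2)) * Real.log ((l k - 2).factorial)) ≥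
          (∏ j ∈ Finset.range i, ((l j : ℝ) - 2) / (l j)) * (1 / (1 + T)) *
            (∑ k ∈ Finset.range (i + 1),
              (∏ j ∈ Finset.range k, (l j : ℝ)) * Real.log ((l k).factorial))) ∧
    (∀ α : ℝ, Tendsto (fun i => (l i : ℝ)) atTop atTop →
      Tendsto (fun i => ∏ j ∈ Finset.range i, ((l j : ℝ) - 2) / (l j)) atTop (nhds α) →
      α ≤ liminf (fun i =>
        (∑ k ∈ Finset.range (i + 1),
            (∏ j ∈ Finset.range k, ((l j : ℝ) - 2)) * Real.log ((l k - 2).factorial)) /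
        (∑ k ∈ Finset.range (i + 1),
            (∏ j ∈ Finset.range k, (l j : ℝ)) * Real.log ((l k).factorial))) atTop) := by
  have h5 : ∀ j, (5:ℝ) ≤ (l j : ℝ) := fun j => by exact_mod_cast hl j
  have hp : ∀ j, (0:ℝ) < (l j : ℝ) := fun j => by linarith [h5 j]
  set A : ℕ → ℝ := fun i => ∑ k ∈ Finset.range (i + 1),
      (∏ j ∈ Finset.range k, ((l j : ℝ) - 2)) * Real.log ((l k - 2).factorial) with hA
  set B : ℕ → ℝ := fun i => ∑ k ∈ Finset.range (i + 1),
      (∏ j ∈ Finset.range k, (l j : ℝ)) * Real.log ((l k).factorial) with hB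
  set al : ℕ → ℝ := fun i => ∏ j ∈ Finset.range i, ((l j : ℝ) - 2) / (l j) with hal
  have h1T : ∀ i, (0:ℝ) < 1 + 16 / (l i : ℝ) := fun i => by positivity
  have hmain : ∀ i, al i * (1 / (1 + 16 / (l i : ℝ))) * B i ≤ A i := by
    intro i
    have hk := key l hl i
    calc al i * (1 / (1 + 16 / (l i : ℝ))) * B i
        = (al i * B i) * (1 / (1 + 16 / (l i : ℝ))) := by ring
      _ ≤ ((1 + 16 / (l i : ℝ)) * A i) * (1 / (1 + 16 / (l i : ℝ))) := by
          refine mul_le_mul_of_nonneg_right hk ?_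
          positivity
      _ = A i := by field_simp
  constructor
  · intro i
    exact ⟨16 / (l i : ℝ), by positivity, le_refl _, hmain i⟩
  · intro α htop hlim
    have hBpos : ∀ i, 0 < B i := by
      intro i
      refine Finset.sum_pos' ?_ ⟨0, Finset.mem_range.mpr (Nat.succ_pos i), ?_⟩
      · intro k _
        refine mul_nonneg (Finset.prod_nonneg fun j _ => (hp j).le) ?_
        exact Real.log_nonneg (by exact_mod_cast (Nat.factorial_pos _))
      · simp only [Finset.range_zero, Finset.prod_empty, one_mul]
        refine Real.log_pos ?_
        have h1 : 5 ≤ (l 0).factorial := le_trans (hl 0) (Nat.self_le_factorial _)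
        exact_mod_cast lt_of_lt_of_le (by norm_num) h1
    have hABle : ∀ i, A i ≤ B i := by
      intro i
      refine Finset.sum_le_sum fun k _ => ?_
      refine mul_le_mul ?_ ?_ ?_ ?_
      · exact Finset.prod_le_prod (fun j _ => by linarith [h5 j]) (fun j _ => by linarith)
      · refine Real.log_le_log (by exact_mod_cast (Nat.factorial_pos _)) ?_
        exact_mod_cast Nat.factorial_le (by omega)
      · exact Real.log_nonneg (by exact_mod_cast (Nat.factorial_pos _))
      · exact Finset.prod_nonneg fun j _ => (hp j).le
    have h16 : Tendsto (fun i => 16 / (l i : ℝ)) atTop (nhds 0) :=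
      Tendsto.div_atTop tendsto_const_nhds htop
    have hden : Tendsto (fun i => 1 + 16 / (l i : ℝ)) atTop (nhds 1) := by
      simpa using tendsto_const_nhds.add h16
    have hf : Tendsto (fun i => al i / (1 + 16 / (l i : ℝ))) atTop (nhds α) := by
      simpa [Pi.div_def] using hlim.div hden one_ne_zero
    have hfg : ∀ i, al i / (1 + 16 / (l i : ℝ)) ≤ A i / B i := by
      intro i
      rw [div_le_div_iff₀ (h1T i) (hBpos i)]
      calc al i * B i = al i * (1 / (1 + 16 / (l i : ℝ))) * B i * (1 + 16 / (l i : ℝ)) := by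
            field_simp
        _ ≤ A i * (1 + 16 / (l i : ℝ)) :=
            mul_le_mul_of_nonneg_right (hmain i) (h1T i).le
    have hbddA : IsBoundedUnder (· ≤ ·) atTop (fun i => A i / B i) := by
      refine isBoundedUnder_of ⟨1, fun i => ?_⟩
      exact div_le_one_of_le₀ (hABle i) (hBpos i).le
    rw [← hf.liminf_eq]
    exact liminf_le_liminf (Eventually.of_forall hfg) hf.isBoundedUnder_ge
      hbddA.isCoboundedUnder_ge
end
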